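/- Let L be a Lie algebra over a field K with basis (v_i)_{i∈I}, and let S(L) be its symmetric algebra with its Poisson bracket. Then: (a) S(L) is strongly solvable if and only if L is abelian; (b) if the characteristic of K is not 2, then S(L) is solvable if and only if L is abelian. -/

import Mathlib

open MvPolynomial

/-- The derived series of a Poisson algebra `S` with bracket `P`: `δ 0 = S` and `δ (n+1)` is
the `K`-span of all brackets `{a, b}` with `a, b ∈ δ n`. -/
def poissonDerivedSeries (K S : Type*) [Field K] [CommRing S] [Algebra K S]
    (P : S →ₗ[K] S →ₗ[K] S) : ℕ → Submodule K S
  | 0 => ⊤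
  | n + 1 => Submodule.span K
      {x : S | ∃ a ∈ poissonDerivedSeries K S P n, ∃ b ∈ poissonDerivedSeries K S P n,
        x = P a b}

/-- The upper derived series of a Poisson algebra `S` with bracket `P`: `δ̃ 0 = S` and
`δ̃ (n+1)` is the `K`-span of all products `{a, b} * c` with `a, b ∈ δ̃ n`, `c ∈ S`. -/
def poissonUpperDerivedSeries (K S : Type*) [Field K] [CommRing S] [Algebra K S]
    (P : S →ₗ[K] S →ₗ[K] S) : ℕ → Submodule K S
  | 0 => ⊤
  | n + 1 => Submodule.span K
      {x : S | ∃ a ∈ poissonUpperDerivedSeries K S P n,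
        ∃ b ∈ poissonUpperDerivedSeries K S P n, ∃ c : S, x = P a b * c}

section PoissonAux
variable {K S : Type*} [Field K] [CommRing S] [Algebra K S]
variable {P : S →ₗ[K] S →ₗ[K] S}

theorem pois_one_left (hleib : ∀ f g h, P (f * g) h = f * P g h + g * P f h) (g : S) :
    P 1 g = 0 := by
  have h := hleib 1 1 g
  rw [one_mul, one_mul] at h
  exact (left_eq_add.mp h)

theorem pois_leib_right (hanti : ∀ f g, P f g = - P g f)
    (hleib : ∀ f g h, P (f * g) h = f * P g h + g * P f h) (h f g : S) :
    P h (f * g) = f * P h g + g * P h f := by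
  rw [hanti h (f * g), hleib f g h, hanti g h, hanti f h]
  ring

theorem pois_sq (hanti : ∀ f g, P f g = - P g f)
    (hleib : ∀ f g h, P (f * g) h = f * P g h + g * P f h)
    (h2 : (2 : K) ≠ 0) (x u : S) :
    P x ((2 : K)⁻¹ • (u * u)) = u * P x u := by
  rw [map_smul, pois_leib_right hanti hleib, ← two_smul K (u * P x u),
    inv_smul_smul₀ h2]

theorem pois_pow_left (hleib : ∀ f g h, P (f * g) h = f * P g h + g * P f h)
    (x : S) (k : ℕ) (w : S) :
    P (x ^ (k + 1)) w = ((k : K) + 1) • (x ^ k * P x w) := by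
  induction k with
  | zero => simp
  | succ k ih =>
    have h : P (x ^ (k + 1) * x) w = x ^ (k + 1) * P x w + x * P (x ^ (k + 1)) w :=
      hleib _ _ _
    rw [← pow_succ] at h
    rw [h, ih, mul_smul_comm]
    rw [show x * (x ^ k * P x w) = x ^ (k + 1) * P x w by ring]
    push_cast
    rw [show ((k : K) + 1 + 1) • (x ^ (k + 1) * P x w)
        = x ^ (k+1) * P x w + ((k:K)+1) • (x ^ (k + 1) * P x w) by
      rw [add_smul, one_smul, add_comm]]

theorem pois_x_pow (halt : ∀ f, P f f = 0) (hanti : ∀ f g, P f g = - P g f)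
    (hleib : ∀ f g h, P (f * g) h = f * P g h + g * P f h) (x : S) (k : ℕ) :
    P x (x ^ k) = 0 := by
  cases k with
  | zero => rw [pow_zero, hanti, pois_one_left hleib, neg_zero]
  | succ k => rw [hanti, pois_pow_left hleib, halt, mul_zero, smul_zero, neg_zero]

theorem pois_key (halt : ∀ f, P f f = 0) (hanti : ∀ f g, P f g = - P g f)
    (hleib : ∀ f g h, P (f * g) h = f * P g h + g * P f h) (x u : S) (a b : ℕ) :
    P (x ^ (a + 1) * u) (x ^ (b + 1) * u)
      = ((a : K) - (b : K)) • (x ^ (a + b + 1) * (u * P x u)) := by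
  have h2 : P u (x ^ (b + 1)) = -(((b : K) + 1) • (x ^ b * P x u)) := by
    rw [hanti, pois_pow_left hleib]
  have h1 : P u (x ^ (b + 1) * u) = u * (-(((b : K) + 1) • (x ^ b * P x u))) := by
    rw [pois_leib_right hanti hleib, halt, mul_zero, zero_add, h2]
  have h3 : P x (x ^ (b + 1) * u) = x ^ (b + 1) * P x u := by
    rw [pois_leib_right hanti hleib, pois_x_pow halt hanti hleib, mul_zero, add_zero]
  calc P (x ^ (a + 1) * u) (x ^ (b + 1) * u)
      = x ^ (a + 1) * P u (x ^ (b + 1) * u) + u * P (x ^ (a + 1)) (x ^ (b + 1) * u) :=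
        hleib _ _ _
    _ = x ^ (a + 1) * (u * (-(((b : K) + 1) • (x ^ b * P x u))))
        + u * (((a : K) + 1) • (x ^ a * (x ^ (b + 1) * P x u))) := by
        rw [h1, pois_pow_left hleib, h3]
    _ = ((a : K) - (b : K)) • (x ^ (a + b + 1) * (u * P x u)) := by
        simp only [mul_neg, mul_smul_comm]
        rw [show x ^ (a+1) * (u * (x ^ b * P x u)) = x ^ (a+b+1) * (u * P x u) by ring,
          show u * (x ^ a * (x ^ (b+1) * P x u)) = x ^ (a+b+1) * (u * P x u) by ring,
          neg_add_eq_sub, ← sub_smul]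
        congr 1
        ring

theorem pois_mulpow_right (halt : ∀ f, P f f = 0) (hanti : ∀ f g, P f g = - P g f)
    (hleib : ∀ f g h, P (f * g) h = f * P g h + g * P f h) (x q : S) (m : ℕ) :
    P x (x ^ m * q) = x ^ m * P x q := by
  rw [pois_leib_right hanti hleib, pois_x_pow halt hanti hleib, mul_zero, add_zero]

/-- The exponent offsets used in the induction showing that the derived series of a
nonabelian symmetric Poisson algebra does not vanish. -/
def machSigma : ℕ → ℕ
  | 0 => 0
  | n + 1 => 2 * machSigma n + 3

theorem pois_machine (halt : ∀ f, P f f = 0) (hanti : ∀ f g, P f g = - P g f)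
    (hleib : ∀ f g h, P (f * g) h = f * P g h + g * P f h)
    (h2 : (2 : K) ≠ 0) (x : S) (c : ℕ → S)
    (hbase : ∃ q, c 0 = P x q)
    (hrec : ∀ n, c (n + 1) = c n * P x (c n)) :
    ∀ n, ∀ m, machSigma n + 1 ≤ m →
      x ^ m * c n ∈ poissonDerivedSeries K S P (n + 1) := by
  intro n
  induction n with
  | zero =>
    intro m _
    obtain ⟨q, hq⟩ := hbase
    have he : x ^ m * c 0 = P x (x ^ m * q) := by
      rw [pois_mulpow_right halt hanti hleib, hq]
    rw [he]
    exact Submodule.subset_span ⟨x, Submodule.mem_top, x ^ m * q, Submodule.mem_top, rfl⟩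
  | succ n ih =>
    intro m hm
    set s := machSigma n with hs
    have hm' : 2 * s + 3 + 1 ≤ m := by
      simpa [machSigma, ← hs] using hm
    obtain ⟨t, rfl⟩ := Nat.exists_eq_add_of_le hm'
    by_cases hc : ((t : K) + 3) ≠ 0
    · have hkey := pois_key halt hanti hleib x (c n) (s + t + 3) s
      rw [← hrec n] at hkey
      have hcoef : ((s + t + 3 : ℕ) : K) - ((s : ℕ) : K) = (t : K) + 3 := by
        push_cast; ring
      rw [hcoef] at hkey
      have hmem : P (x ^ (s + t + 3 + 1) * c n) (x ^ (s + 1) * c n)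
          ∈ poissonDerivedSeries K S P (n + 2) :=
        Submodule.subset_span ⟨_, ih _ (by omega), _, ih _ (by omega), rfl⟩
      rw [hkey] at hmem
      have hfin := (poissonDerivedSeries K S P (n + 2)).smul_mem ((t : K) + 3)⁻¹ hmem
      rw [inv_smul_smul₀ hc] at hfin
      rw [show 2 * s + 3 + 1 + t = s + t + 3 + s + 1 by omega]
      exact hfin
    · push_neg at hc
      have hc1 : ((t : K) + 1) ≠ 0 := by
        intro h1
        apply h2
        have h3 : ((t : K) + 3) - ((t : K) + 1) = 0 := by rw [hc, h1, sub_zero]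
        calc (2 : K) = ((t : K) + 3) - ((t : K) + 1) := by ring
          _ = 0 := h3
      have hkey := pois_key halt hanti hleib x (c n) (s + t + 2) (s + 1)
      rw [← hrec n] at hkey
      have hcoef : ((s + t + 2 : ℕ) : K) - ((s + 1 : ℕ) : K) = (t : K) + 1 := by
        push_cast; ring
      rw [hcoef] at hkey
      have hmem : P (x ^ (s + t + 2 + 1) * c n) (x ^ (s + 1 + 1) * c n)
          ∈ poissonDerivedSeries K S P (n + 2) :=
        Submodule.subset_span ⟨_, ih _ (by omega), _, ih _ (by omega), rfl⟩
      rw [hkey] at hmem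
      have hfin := (poissonDerivedSeries K S P (n + 2)).smul_mem ((t : K) + 1)⁻¹ hmem
      rw [inv_smul_smul₀ hc1] at hfin
      rw [show 2 * s + 3 + 1 + t = s + t + 2 + (s + 1) + 1 by omega]
      exact hfin

theorem pois_chain (halt : ∀ f, P f f = 0) (hanti : ∀ f g, P f g = - P g f)
    (hleib : ∀ f g h, P (f * g) h = f * P g h + g * P f h)
    (h2 : (2 : K) ≠ 0) [IsDomain S] (x y : S)
    (hy : y ≠ 0) (hxy : P x y ≠ 0) :
    ∃ c : ℕ → S, (∃ q, c 0 = P x q) ∧ (∀ n, c (n + 1) = c n * P x (c n)) ∧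
      (∀ n, c n ≠ 0) := by
  have hPx1 : P x (1 : S) = 0 := by
    rw [hanti, pois_one_left hleib, neg_zero]
  by_cases hA : ∃ g, P x g ≠ 0 ∧ P x (P x g) = 0
  · obtain ⟨g, hg, hgg⟩ := hA
    set b := P x g with hb
    have hgne : g ≠ 0 := by
      intro h; apply hg; rw [hb, h, map_zero]
    have hpow : ∀ m : ℕ, P x (b ^ m) = 0 := by
      intro m
      induction m with
      | zero => rw [pow_zero]; exact hPx1
      | succ m ih =>
        rw [pow_succ, pois_leib_right hanti hleib, ih, hgg, mul_zero, mul_zero, add_zero]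
    refine ⟨Nat.rec (g * b) (fun _ cn => cn * P x cn),
      ⟨(2 : K)⁻¹ • (g * g), by rw [pois_sq hanti hleib h2]; rfl⟩, fun n => rfl, ?_⟩
    have hform : ∀ n, ∃ m : ℕ,
        (Nat.rec (g * b) (fun _ cn => cn * P x cn) n : S) = g * b ^ (m + 1) := by
      intro n
      induction n with
      | zero => exact ⟨0, by rw [pow_one]; rfl⟩
      | succ n ih =>
        obtain ⟨m, hm⟩ := ih
        refine ⟨2 * m + 2, ?_⟩
        show (Nat.rec (g * b) (fun _ cn => cn * P x cn) n : S) *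
          P x (Nat.rec (g * b) (fun _ cn => cn * P x cn) n) = g * b ^ (2 * m + 2 + 1)
        rw [hm, pois_leib_right hanti hleib, hpow, mul_zero, zero_add, ← hb]
        rw [show 2 * m + 2 + 1 = (m + 1) + ((m + 1) + 1) by omega, pow_add, pow_succ]
        ring
    intro n
    obtain ⟨m, hm⟩ := hform n
    show (Nat.rec (g * b) (fun _ cn => cn * P x cn) n : S) ≠ 0
    rw [hm]
    exact mul_ne_zero hgne (pow_ne_zero _ hg)
  · push_neg at hA
    refine ⟨Nat.rec (y * P x y) (fun _ cn => cn * P x cn),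
      ⟨(2 : K)⁻¹ • (y * y), by rw [pois_sq hanti hleib h2]; rfl⟩, fun n => rfl, ?_⟩
    have hinv : ∀ n, (Nat.rec (y * P x y) (fun _ cn => cn * P x cn) n : S) ≠ 0 ∧
        ∃ q, (Nat.rec (y * P x y) (fun _ cn => cn * P x cn) n : S) = P x q := by
      intro n
      induction n with
      | zero =>
        exact ⟨mul_ne_zero hy hxy, ⟨(2 : K)⁻¹ • (y * y), by
          rw [pois_sq hanti hleib h2]; rfl⟩⟩
      | succ n ih =>
        obtain ⟨hne, q, hq⟩ := ih
        set cn : S := Nat.rec (y * P x y) (fun _ cn => cn * P x cn) n with hcn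
        have hD : P x cn ≠ 0 := by
          intro h0
          rcases eq_or_ne (P x q) 0 with h | h
          · exact hne (hq.trans h)
          · exact hA q h (by rw [← hq]; exact h0)
        refine ⟨mul_ne_zero hne hD, ⟨(2 : K)⁻¹ • (cn * cn), ?_⟩⟩
        show cn * P x cn = _
        rw [pois_sq hanti hleib h2]
    exact fun n => (hinv n).1

theorem pois_not_solvable (halt : ∀ f, P f f = 0) (hanti : ∀ f g, P f g = - P g f)
    (hleib : ∀ f g h, P (f * g) h = f * P g h + g * P f h)
    (h2 : (2 : K) ≠ 0) [IsDomain S] (x y : S)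
    (hx : x ≠ 0) (hy : y ≠ 0) (hxy : P x y ≠ 0) (s : ℕ) :
    poissonDerivedSeries K S P s ≠ ⊥ := by
  obtain ⟨c, hbase, hrec, hne⟩ := pois_chain halt hanti hleib h2 x y hy hxy
  cases s with
  | zero =>
    show (⊤ : Submodule K S) ≠ ⊥
    simp [Submodule.eq_bot_iff]
  | succ n =>
    intro hbot
    have hmem := pois_machine halt hanti hleib h2 x c hbase hrec n (machSigma n + 1) le_rfl
    rw [hbot, Submodule.mem_bot] at hmem
    exact mul_ne_zero (pow_ne_zero _ hx) (hne n) hmem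

theorem pois_not_strongly_solvable (halt : ∀ f, P f f = 0)
    (hanti : ∀ f g, P f g = - P g f)
    (hleib : ∀ f g h, P (f * g) h = f * P g h + g * P f h)
    [IsDomain S] (x y : S) (hz : P x y ≠ 0) (s : ℕ) :
    poissonUpperDerivedSeries K S P s ≠ ⊥ := by
  have hinv : ∀ n, ∃ c : S, c ≠ 0 ∧ ∀ w, c * w ∈ poissonUpperDerivedSeries K S P n := by
    intro n
    induction n with
    | zero => exact ⟨1, one_ne_zero, fun w => Submodule.mem_top⟩
    | succ n ih =>
      obtain ⟨c, hc, hw⟩ := ih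
      have hcmem : c ∈ poissonUpperDerivedSeries K S P n := by
        have := hw 1; rwa [mul_one] at this
      by_cases hA : P x c ≠ 0
      · refine ⟨c * P x c, mul_ne_zero hc hA, fun w => ?_⟩
        apply Submodule.subset_span
        refine ⟨c * x, hw x, c, hcmem, w, ?_⟩
        rw [hleib, halt, mul_zero, add_zero]
      · by_cases hB : P y c ≠ 0
        · refine ⟨c * P y c, mul_ne_zero hc hB, fun w => ?_⟩
          apply Submodule.subset_span
          refine ⟨c * y, hw y, c, hcmem, w, ?_⟩
          rw [hleib, halt, mul_zero, add_zero]
        · push_neg at hA hB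
          refine ⟨c * (c * P x y), mul_ne_zero hc (mul_ne_zero hc hz), fun w => ?_⟩
          apply Submodule.subset_span
          refine ⟨c * x, hw x, c * y, hw y, w, ?_⟩
          have hxy' : P x (c * y) = c * P x y := by
            rw [pois_leib_right hanti hleib, hA, mul_zero, add_zero]
          have hcy : P c (c * y) = 0 := by
            rw [pois_leib_right hanti hleib, halt, mul_zero, add_zero,
              hanti c y, hB, neg_zero, mul_zero]
          rw [hleib, hxy', hcy, mul_zero, add_zero]
  intro hbot
  obtain ⟨c, hc, hw⟩ := hinv s
  have hmem := hw 1
  rw [hbot, mul_one, Submodule.mem_bot] at hmem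
  exact hc hmem

end PoissonAux

section Glue
variable {K L I : Type*} [Field K] [LieRing L] [LieAlgebra K L]

theorem abelian_of_basis (B : Module.Basis I K L) (h : ∀ i j, ⁅B i, B j⁆ = 0) :
    IsLieAbelian L := by
  constructor
  intro u v
  have hu : u ∈ Submodule.span K (Set.range B) := by rw [Module.Basis.span_eq]; trivial
  have hv : v ∈ Submodule.span K (Set.range B) := by rw [Module.Basis.span_eq]; trivial
  induction hu using Submodule.span_induction with
  | mem w hwr =>
    obtain ⟨i, rfl⟩ := hwr
    induction hv using Submodule.span_induction with
    | mem w' hw' => obtain ⟨j, rfl⟩ := hw'; exact h i j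
    | zero => exact lie_zero _
    | add a b _ _ ha hb => rw [lie_add, ha, hb, add_zero]
    | smul a w' _ hw' => rw [lie_smul, hw', smul_zero]
  | zero => exact zero_lie _
  | add a b _ _ ha hb => rw [add_lie, ha, hb, add_zero]
  | smul a w _ hw => rw [smul_lie, hw, smul_zero]

theorem constr_X_ne_zero [DecidableEq I] (B : Module.Basis I K L) {w : L} (hw : w ≠ 0) :
    B.constr K (fun i => (X i : MvPolynomial I K)) w ≠ 0 := by
  intro h0
  have hrepr : B.repr w ≠ 0 := by
    intro h; apply hw
    have := congrArg B.repr.symm h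
    rwa [LinearEquiv.symm_apply_apply, map_zero] at this
  obtain ⟨i0, hi0⟩ := Finsupp.ne_iff.mp hrepr
  rw [Finsupp.coe_zero, Pi.zero_apply] at hi0
  apply hi0
  have happ := congrArg (aeval (fun k : I => if k = i0 then (1 : K) else 0)) h0
  rw [Module.Basis.constr_apply, map_zero, map_finsuppSum] at happ
  simp only [map_smul, aeval_X, smul_eq_mul] at happ
  rw [Finsupp.sum] at happ
  rw [Finset.sum_eq_single i0 (by intro b _ hb; simp [hb]) (by
    intro hnot
    simp [Finsupp.notMem_support_iff.mp hnot])] at happ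
  simpa using happ

theorem pois_zero {P : MvPolynomial I K →ₗ[K] MvPolynomial I K →ₗ[K] MvPolynomial I K}
    (hanti : ∀ f g, P f g = - P g f)
    (hleib : ∀ f g h, P (f * g) h = f * P g h + g * P f h)
    (hz : ∀ i j, P (X i) (X j) = 0) (f g : MvPolynomial I K) : P f g = 0 := by
  have hCleft : ∀ (a : K) (g : MvPolynomial I K), P (C a) g = 0 := by
    intro a g
    rw [show (C a : MvPolynomial I K) = a • (1 : MvPolynomial I K) by
        rw [smul_eq_C_mul, mul_one],
      map_smul, LinearMap.smul_apply, pois_one_left hleib, smul_zero]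
  have hXg : ∀ i (g : MvPolynomial I K), P (X i) g = 0 := by
    intro i g
    induction g using MvPolynomial.induction_on with
    | C a => rw [hanti, hCleft, neg_zero]
    | add p q hp hq => rw [map_add, hp, hq, add_zero]
    | mul_X p j hp => rw [pois_leib_right hanti hleib, hp, hz, mul_zero, mul_zero, add_zero]
  induction f using MvPolynomial.induction_on with
  | C a => exact hCleft a g
  | add p q hp hq => rw [map_add, LinearMap.add_apply, hp, hq, add_zero]
  | mul_X p j hp => rw [hleib, hXg, hp, mul_zero, mul_zero, add_zero]

end Glue

/-- For a Lie algebra `L` with basis `(v_i)` over a field `K`, identify the symmetric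
algebra `S(L)` with the polynomial algebra `K[X_i]`, let `θ : L → S(L)` be the linear map
with `θ(v_i) = X_i`, and let `{·,·}` be the Poisson bracket, i.e. the unique bilinear,
alternating map satisfying the Leibniz rule with `{X_i, X_j} = θ([v_i, v_j])`.  Then:
(a) `S(L)` is strongly solvable iff `L` is abelian; and (b) if `char K ≠ 2`, then `S(L)` is
solvable iff `L` is abelian. -/
theorem symmetricAlgebra_solvable_iff_abelian
    {K L I : Type*} [Field K] [LieRing L] [LieAlgebra K L] (B : Module.Basis I K L)
    (P : MvPolynomial I K →ₗ[K] MvPolynomial I K →ₗ[K] MvPolynomial I K)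
    (halt : ∀ f, P f f = 0)
    (hanti : ∀ f g, P f g = - P g f)
    (hjac : ∀ f g h, P f (P g h) = P (P f g) h + P g (P f h))
    (hleib : ∀ f g h, P (f * g) h = f * P g h + g * P f h)
    (hX : ∀ i j, P (X i) (X j) = B.constr K (fun i => (X i : MvPolynomial I K)) ⁅B i, B j⁆) :
    ((∃ s : ℕ, poissonUpperDerivedSeries K (MvPolynomial I K) P s = ⊥) ↔ IsLieAbelian L) ∧
    ((ringChar K ≠ 2) →
      ((∃ s : ℕ, poissonDerivedSeries K (MvPolynomial I K) P s = ⊥) ↔ IsLieAbelian L)) := by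
  classical
  have habelian_case : IsLieAbelian L → ∀ f g, P f g = 0 := by
    intro hab
    refine pois_zero hanti hleib (fun i j => ?_)
    rw [hX, trivial_lie_zero, map_zero]
  have hnonab : ¬IsLieAbelian L → ∃ i j, P (X i) (X j) ≠ 0 := by
    intro hab
    have hexist : ∃ i j, ⁅B i, B j⁆ ≠ 0 := by
      by_contra hno
      push_neg at hno
      exact hab (abelian_of_basis B hno)
    obtain ⟨i, j, hij⟩ := hexist
    refine ⟨i, j, ?_⟩
    rw [hX]
    exact constr_X_ne_zero B hij
  constructor
  · constructor
    · intro hs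
      by_contra hab
      obtain ⟨i, j, hz⟩ := hnonab hab
      obtain ⟨s, hbot⟩ := hs
      exact pois_not_strongly_solvable halt hanti hleib (X i) (X j) hz s hbot
    · intro hab
      refine ⟨1, ?_⟩
      simp only [poissonUpperDerivedSeries]
      rw [Submodule.span_eq_bot]
      rintro f ⟨a, -, b, -, c, rfl⟩
      rw [habelian_case hab, zero_mul]
  · intro hchar
    have h2 : (2 : K) ≠ 0 := by
      intro h20
      have hdvd : ringChar K ∣ 2 := by
        have := (CharP.cast_eq_zero_iff K (ringChar K) 2).mp (by exact_mod_cast h20)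
        exact this
      rcases (Nat.prime_two.eq_one_or_self_of_dvd _ hdvd) with h | h
      · exact CharP.char_ne_one K (ringChar K) h
      · exact hchar h
    constructor
    · intro hs
      by_contra hab
      obtain ⟨i, j, hz⟩ := hnonab hab
      obtain ⟨s, hbot⟩ := hs
      exact pois_not_solvable halt hanti hleib h2 (X i) (X j)
        (MvPolynomial.X_ne_zero i) (MvPolynomial.X_ne_zero j) hz s hbot
    · intro hab
      refine ⟨1, ?_⟩
      simp only [poissonDerivedSeries]
      rw [Submodule.span_eq_bot]
      rintro f ⟨a, -, b, -, rfl⟩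
      exact habelian_case hab a b
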